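/- arXiv:0801.0920 — 3 statements merged into one kernel-verified Lean document; each statement's English description precedes it below -/
import Mathlib

section
/- Let O be the ring of integers of a finite unramified extension of ℚ_ℓ and f a distinguished polynomial in O[T] (monic with all lower coefficients divisible by ℓ). Then for all sufficiently large n there exist polynomials a_n, b_n in O[T] such that ω_{n+1}/ω_n = Σ_{k=0}^{ℓ−1}(1+T)^{kℓ^n} = ℓ(1 + ℓa_n) + b_n f, where ω_n = (1+T)^{ℓ^n} − 1. Moreover 1 + ℓa_n is a unit in the local ring O[[T]]. -/
/-- A distinguished polynomial over `O`: monic, with all lower coefficients divisible by `ℓ`. -/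
def IsDistinguishedAt {O : Type*} [CommRing O] (ℓ : ℕ) (f : Polynomial O) : Prop :=
  f.Monic ∧ ∀ i < f.natDegree, f.coeff i ∈ Ideal.span {(ℓ : O)}

/-- If `x ≡ y mod ℓ` then `x^ℓ ≡ y^ℓ mod ℓ²`. -/
lemma sq_dvd_pow_sub_pow_aux {R : Type*} [CommRing R] {ℓ : ℕ} (hp : ℓ.Prime)
    {x y : R} (h : (ℓ : R) ∣ x - y) : (ℓ : R) ^ 2 ∣ x ^ ℓ - y ^ ℓ := by
  obtain ⟨z, hz⟩ := h
  have hx : x = y + (ℓ : R) * z := by rw [← hz]; ring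
  rw [hx, add_pow, Finset.sum_range_succ]
  simp only [Nat.sub_self, pow_zero, mul_one, Nat.choose_self, Nat.cast_one]
  rw [add_sub_cancel_right]
  refine Finset.dvd_sum fun k hk => ?_
  rw [Finset.mem_range] at hk
  rw [mul_assoc]
  refine Dvd.dvd.mul_left ?_ _
  rcases Nat.eq_zero_or_pos k with rfl | hk0
  · refine Dvd.dvd.mul_right ?_ _
    rw [Nat.sub_zero, mul_pow]
    exact Dvd.dvd.mul_right (pow_dvd_pow _ hp.two_le) _
  · rw [sq]
    exact mul_dvd_mul (dvd_pow (dvd_mul_right _ _) (Nat.sub_ne_zero_of_lt hk))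
      (Nat.cast_dvd_cast (hp.dvd_choose_self hk0.ne' hk))

/-- For `O` the ring of integers of a finite unramified extension of `ℚ_ℓ` and `f`
distinguished in `O[T]`, for all sufficiently large `n` one can write
`ω_{n+1}/ω_n = Σ_{k<ℓ} (1+T)^(kℓ^n) = ℓ(1 + ℓa_n) + b_n f`, with `1 + ℓa_n` a unit
in `O[[T]]`. -/
theorem omega_ratio_decomposition (ℓ : ℕ) [Fact ℓ.Prime]
    (O : Type*) [CommRing O] [IsDomain O] [Algebra ℤ_[ℓ] O]
    [Module.Finite ℤ_[ℓ] O] [Module.Free ℤ_[ℓ] O]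
    (hmax : (Ideal.span {(ℓ : O)}).IsMaximal)
    (huniq : ∀ M : Ideal O, M.IsMaximal → M = Ideal.span {(ℓ : O)})
    (f : Polynomial O) (hf : IsDistinguishedAt ℓ f) :
    ∃ n₀ : ℕ, ∀ n ≥ n₀, ∃ a b : Polynomial O,
      ((1 + Polynomial.X : Polynomial O) ^ (ℓ ^ n) - 1) *
          (∑ k ∈ Finset.range ℓ, (1 + Polynomial.X : Polynomial O) ^ (k * ℓ ^ n)) =
        (1 + Polynomial.X : Polynomial O) ^ (ℓ ^ (n + 1)) - 1 ∧
      (∑ k ∈ Finset.range ℓ, (1 + Polynomial.X : Polynomial O) ^ (k * ℓ ^ n)) =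
        (ℓ : Polynomial O) * (1 + (ℓ : Polynomial O) * a) + b * f ∧
      IsUnit ((1 + (ℓ : Polynomial O) * a : Polynomial O) : PowerSeries O) := by
  obtain ⟨hmon, hlow⟩ := hf
  have hp : ℓ.Prime := Fact.out
  set d := f.natDegree with hd
  set I : Ideal (Polynomial O) := Ideal.span {(ℓ : Polynomial O) ^ 2, f} with hI
  have hℓC : ((ℓ : Polynomial O)) = Polynomial.C (ℓ : O) := by
    simp
  have hmapspan : Ideal.map Polynomial.C (Ideal.span {(ℓ : O)}) =
      Ideal.span {(ℓ : Polynomial O)} := by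
    rw [Ideal.map_span, Set.image_singleton, hℓC]
  have hsqI : (ℓ : Polynomial O) ^ 2 ∈ I := Ideal.subset_span (Set.mem_insert _ _)
  have hfI : f ∈ I := Ideal.subset_span (Set.mem_insert_of_mem _ rfl)
  set r : Polynomial O := f - Polynomial.X ^ d with hr
  have hrmem : r ∈ Ideal.span {(ℓ : Polynomial O)} := by
    rw [← hmapspan, Ideal.mem_map_C_iff]
    intro i
    rcases lt_trichotomy i d with h | h | h
    · simpa [hr, Polynomial.coeff_X_pow, h.ne] using hlow i h
    · subst h
      have hc : f.coeff d = 1 := hmon.coeff_natDegree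
      simp [hr, Polynomial.coeff_X_pow, hc]
    · have h1 : f.coeff i = 0 := Polynomial.coeff_eq_zero_of_natDegree_lt h
      simp [hr, Polynomial.coeff_X_pow, h.ne', h1]
  have hXN : ∀ N, 2 * d ≤ N → (Polynomial.X : Polynomial O) ^ N ∈ I := by
    intro N hN
    have hsplit : (Polynomial.X : Polynomial O) ^ N =
        Polynomial.X ^ (N - 2 * d) * ((Polynomial.X : Polynomial O) ^ d) ^ 2 := by
      rw [← pow_mul, ← pow_add]
      congr 1
      omega
    rw [hsplit]
    apply Ideal.mul_mem_left
    have hxd : (Polynomial.X : Polynomial O) ^ d = f - r := by rw [hr]; ring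
    have hsq : (f - r) ^ 2 = f * (f - 2 * r) + r * r := by ring
    rw [hxd, hsq]
    refine Ideal.add_mem _ (Ideal.mul_mem_right _ _ hfI) ?_
    obtain ⟨s, hs⟩ := Ideal.mem_span_singleton.mp hrmem
    have hrr : r * r = (ℓ : Polynomial O) ^ 2 * (s * s) := by rw [hs]; ring
    rw [hrr]
    exact Ideal.mul_mem_right _ _ hsqI
  -- characteristic ℓ quotient
  haveI := hmax
  haveI : Nontrivial (O ⧸ Ideal.span {(ℓ : O)}) := Ideal.Quotient.nontrivial_iff.mpr hmax.ne_top
  have hK0 : ((ℓ : ℕ) : O ⧸ Ideal.span {(ℓ : O)}) = 0 := by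
    rw [← map_natCast (Ideal.Quotient.mk (Ideal.span {(ℓ : O)}))]
    exact Ideal.Quotient.eq_zero_iff_mem.mpr (Ideal.subset_span rfl)
  haveI : CharP (O ⧸ Ideal.span {(ℓ : O)}) ℓ := (CharP.charP_iff_prime_eq_zero hp).mpr hK0
  have hfrob : ∀ m : ℕ,
      ((1 + Polynomial.X : Polynomial O) ^ (ℓ ^ m) - (1 + Polynomial.X ^ (ℓ ^ m))) ∈
        Ideal.span {(ℓ : Polynomial O)} := by
    intro m
    have hker : ((1 + Polynomial.X : Polynomial O) ^ (ℓ ^ m) - (1 + Polynomial.X ^ (ℓ ^ m))) ∈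
        RingHom.ker (Polynomial.mapRingHom (Ideal.Quotient.mk (Ideal.span {(ℓ : O)}))) := by
      rw [RingHom.mem_ker]
      simp only [Polynomial.coe_mapRingHom, Polynomial.map_sub, Polynomial.map_add,
        Polynomial.map_pow, Polynomial.map_one, Polynomial.map_X]
      rw [add_pow_char_pow, one_pow, sub_self]
    rwa [Polynomial.ker_mapRingHom, Ideal.mk_ker, hmapspan] at hker
  refine ⟨2 * d + 2, fun n hn => ?_⟩
  obtain ⟨m, rfl⟩ : ∃ m, n = m + 1 := ⟨n - 1, by omega⟩
  set S : Polynomial O := Polynomial.X ^ (ℓ ^ m) with hS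
  set u : Polynomial O := (1 + Polynomial.X) ^ (ℓ ^ (m + 1)) with hu
  set v : Polynomial O := (1 + S) ^ ℓ with hv
  have hpowu : u = ((1 + Polynomial.X : Polynomial O) ^ (ℓ ^ m)) ^ ℓ := by
    rw [hu, ← pow_mul, pow_succ]
  have huv : (ℓ : Polynomial O) ^ 2 ∣ u - v := by
    rw [hpowu, hv]
    exact sq_dvd_pow_sub_pow_aux hp (Ideal.mem_span_singleton.mp (hfrob m))
  have hexp : 2 * d ≤ ℓ ^ m := by
    have h1 : m < 2 ^ m := m.lt_two_pow_self
    have h2 : 2 ^ m ≤ ℓ ^ m := Nat.pow_le_pow_left hp.two_le m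
    omega
  have hSI : S ∈ I := hXN _ hexp
  have hPu : (∑ k ∈ Finset.range ℓ, (1 + Polynomial.X : Polynomial O) ^ (k * ℓ ^ (m + 1))) =
      ∑ k ∈ Finset.range ℓ, u ^ k := by
    refine Finset.sum_congr rfl fun k _ => ?_
    rw [hu, ← pow_mul, mul_comm]
  have hkey : (∑ k ∈ Finset.range ℓ, (1 + Polynomial.X : Polynomial O) ^ (k * ℓ ^ (m + 1))) -
      (ℓ : Polynomial O) ∈ I := by
    rw [hPu]
    have h1 : (∑ k ∈ Finset.range ℓ, u ^ k) - (∑ k ∈ Finset.range ℓ, v ^ k) ∈ I := by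
      rw [← Finset.sum_sub_distrib]
      refine Ideal.sum_mem _ fun k _ => ?_
      have hdvd : (ℓ : Polynomial O) ^ 2 ∣ u ^ k - v ^ k :=
        dvd_trans huv (sub_dvd_pow_sub_pow u v k)
      obtain ⟨c, hc⟩ := hdvd
      rw [hc]
      exact Ideal.mul_mem_right _ _ hsqI
    have h2 : (∑ k ∈ Finset.range ℓ, v ^ k) - (ℓ : Polynomial O) ∈ I := by
      have hsum : (∑ k ∈ Finset.range ℓ, v ^ k) - (ℓ : Polynomial O) =
          ∑ k ∈ Finset.range ℓ, (v ^ k - 1) := by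
        rw [Finset.sum_sub_distrib]
        simp
      rw [hsum]
      refine Ideal.sum_mem _ fun k _ => ?_
      have hdvd : S ∣ v ^ k - 1 := by
        have h := sub_dvd_pow_sub_pow (1 + S) 1 (ℓ * k)
        rw [add_sub_cancel_left, one_pow, pow_mul, ← hv] at h
        exact h
      obtain ⟨c, hc⟩ := hdvd
      rw [hc]
      exact Ideal.mul_mem_right _ _ hSI
    have := Ideal.add_mem _ h1 h2
    rwa [sub_add_sub_cancel] at this
  obtain ⟨a, b, hab⟩ := Ideal.mem_span_pair.mp hkey
  refine ⟨a, b, ?_, ?_, ?_⟩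
  · rw [hPu, mul_comm, geom_sum_mul, hu, ← pow_mul, ← pow_succ]
  · linear_combination -hab
  · rw [PowerSeries.isUnit_iff_constantCoeff, Polynomial.constantCoeff_coe]
    by_contra hcon
    obtain ⟨M, hM, hmem⟩ := exists_max_ideal_of_mem_nonunits hcon
    rw [huniq M hM] at hmem
    have h1 : (1 + (ℓ : Polynomial O) * a).coeff 0 = 1 + (ℓ : O) * a.coeff 0 := by
      simp [Polynomial.mul_coeff_zero, Polynomial.coeff_natCast_ite]
    rw [h1] at hmem
    have h2 : (ℓ : O) * a.coeff 0 ∈ Ideal.span {(ℓ : O)} :=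
      Ideal.mem_span_singleton.mpr (dvd_mul_right _ _)
    have h3 : (1 : O) ∈ Ideal.span {(ℓ : O)} := by
      have := Ideal.sub_mem _ hmem h2
      simpa using this
    exact hmax.ne_top ((Ideal.eq_top_iff_one _).mpr h3)
end

section
/- Let O be the valuation ring of a finite unramified extension of ℚ_ℓ of degree d over ℤ_ℓ, m a positive integer, and X = Λ_O/ℓ^mΛ_O with Λ_O = O[[T]]. Then for every n ≥ m the index (X : ∇_nX) equals ℓ^{m·ℓ^n·d}, where ∇_n = ℓ^{n+1}X + ω_nX and ω_n = (1+T)^{ℓ^n} − 1. -/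
open Pointwise

section CardHelpers
variable {R S : Type*} [CommRing R] [CommRing S] [Algebra R S]

lemma span_algebraMap_restrictScalars (c : R) :
    (Ideal.span {algebraMap R S c}).restrictScalars R = c • (⊤ : Submodule R S) := by
  ext x
  simp only [Submodule.restrictScalars_mem, Ideal.mem_span_singleton]
  constructor
  · rintro ⟨y, rfl⟩
    have : algebraMap R S c * y = c • y := (Algebra.smul_def c y).symm
    rw [this]
    exact Submodule.smul_mem_pointwise_smul _ _ _ Submodule.mem_top
  · intro hx
    rw [← SetLike.mem_coe, Submodule.coe_pointwise_smul] at hx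
    obtain ⟨y, -, rfl⟩ := hx
    exact ⟨y, (Algebra.smul_def c y)⟩

lemma smul_top_eq_span_singleton (c : R) :
    c • (⊤ : Submodule R R) = Ideal.span {c} := by
  have := (span_algebraMap_restrictScalars (S := R) c).symm
  simpa using this

lemma pi_smul_top {ι : Type*} [Fintype ι] (c : R) :
    c • (⊤ : Submodule R (ι → R)) = Submodule.pi Set.univ (fun _ => c • (⊤ : Submodule R R)) := by
  ext x
  constructor
  · intro hx
    rw [← SetLike.mem_coe, Submodule.coe_pointwise_smul] at hx
    obtain ⟨y, -, rfl⟩ := hx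
    intro i _
    exact Submodule.smul_mem_pointwise_smul _ _ _ Submodule.mem_top
  · intro hx
    have h : ∀ i, ∃ y : R, c • y = x i := by
      intro i
      have := hx i (Set.mem_univ i)
      rw [SetLike.mem_coe, ← SetLike.mem_coe, Submodule.coe_pointwise_smul] at this
      obtain ⟨y, -, hy⟩ := this
      exact ⟨y, hy⟩
    choose y hy using h
    have : c • y = x := funext fun i => hy i
    rw [← this]
    exact Submodule.smul_mem_pointwise_smul _ _ _ Submodule.mem_top

lemma card_quotient_span_algebraMap {ι : Type*} [Fintype ι] (b : Module.Basis ι R S) (c : R) :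
    Nat.card (S ⧸ Ideal.span {algebraMap R S c}) =
      Nat.card (R ⧸ Ideal.span {c}) ^ (Fintype.card ι) := by
  classical
  have e1 : (S ⧸ (Ideal.span {algebraMap R S c}).restrictScalars R) ≃ₗ[R]
      S ⧸ Ideal.span {algebraMap R S c} :=
    Submodule.Quotient.restrictScalarsEquiv R _
  rw [← Nat.card_congr e1.toEquiv, span_algebraMap_restrictScalars]
  have hmap : Submodule.map (b.equivFun.toLinearMap) (c • (⊤ : Submodule R S)) =
      c • (⊤ : Submodule R (ι → R)) := by
    rw [Submodule.map_pointwise_smul, Submodule.map_top, LinearEquiv.range]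
  have e2 := Submodule.Quotient.equiv (c • (⊤ : Submodule R S)) (c • (⊤ : Submodule R (ι → R)))
    b.equivFun hmap
  rw [Nat.card_congr e2.toEquiv, pi_smul_top]
  rw [Nat.card_congr (Submodule.quotientPi _).toEquiv, Nat.card_pi]
  simp [smul_top_eq_span_singleton]

end CardHelpers
open Polynomial PowerSeries

lemma card_padic_quotient (ℓ : ℕ) [Fact ℓ.Prime] (m : ℕ) :
    Nat.card (ℤ_[ℓ] ⧸ Ideal.span {(ℓ : ℤ_[ℓ]) ^ m}) = ℓ ^ m := by
  have hsurj : Function.Surjective (PadicInt.toZModPow (p := ℓ) m) :=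
    ZMod.ringHom_surjective _
  have e := RingHom.quotientKerEquivOfSurjective hsurj
  replace e := (Ideal.quotEquivOfEq (PadicInt.ker_toZModPow (p := ℓ) m).symm).trans e
  rw [Nat.card_congr e.toEquiv, Nat.card_zmod]

section Poly
variable {O : Type*} [CommRing O]

lemma C_dvd_of_dvd_coeff (r : O) (p : Polynomial O) (h : ∀ i, r ∣ p.coeff i) :
    Polynomial.C r ∣ p := by
  choose c hc using h
  refine ⟨∑ i ∈ p.support, Polynomial.C (c i) * Polynomial.X ^ i, ?_⟩
  conv_lhs => rw [p.as_sum_support]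
  rw [Finset.mul_sum]
  refine Finset.sum_congr rfl fun i _ => ?_
  rw [← mul_assoc, ← Polynomial.C_mul, ← hc i, Polynomial.C_mul_X_pow_eq_monomial]

/-- polynomial version of omega -/
noncomputable def omegaP (O : Type*) [CommRing O] (ℓ n : ℕ) : Polynomial O :=
  (1 + Polynomial.X) ^ (ℓ ^ n) - 1

lemma coe_omegaP (ℓ n : ℕ) : ((omegaP O ℓ n : Polynomial O) : PowerSeries O) =
    (1 + PowerSeries.X) ^ (ℓ ^ n) - 1 := by
  rw [omegaP, Polynomial.coe_sub, Polynomial.coe_pow, Polynomial.coe_add, Polynomial.coe_one,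
    Polynomial.coe_X]

lemma omegaP_natDegree [Nontrivial O] (ℓ n : ℕ) (hN : 0 < ℓ ^ n) :
    (omegaP O ℓ n).natDegree = ℓ ^ n := by
  have h1 : ((1 : Polynomial O) + Polynomial.X).Monic := by
    simpa [add_comm] using (Polynomial.monic_X_add_C (1 : O))
  have hd : ((1 + Polynomial.X : Polynomial O) ^ (ℓ ^ n)).natDegree = ℓ ^ n := by
    rw [h1.natDegree_pow,
      show (1 + Polynomial.X : Polynomial O) = Polynomial.X + Polynomial.C 1 by
        rw [Polynomial.C_1, add_comm],
      Polynomial.natDegree_X_add_C, mul_one]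
  rw [omegaP,
    show ((1 + Polynomial.X : Polynomial O) ^ (ℓ ^ n) - 1) =
      ((1 + Polynomial.X) ^ (ℓ ^ n) - Polynomial.C 1) from by rw [Polynomial.C_1],
    Polynomial.natDegree_sub_C, hd]

lemma omegaP_monic [Nontrivial O] (ℓ n : ℕ) (hN : 0 < ℓ ^ n) : (omegaP O ℓ n).Monic := by
  refine Polynomial.monic_of_natDegree_le_of_coeff_eq_one (ℓ ^ n)
    (le_of_eq (omegaP_natDegree ℓ n hN)) ?_
  rw [omegaP, Polynomial.coeff_sub, Polynomial.coeff_one_add_X_pow, Nat.choose_self,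
    Polynomial.coeff_one, if_neg (by omega)]
  simp

lemma exists_omegaP_eq (ℓ n : ℕ) (hℓ : ℓ.Prime) :
    ∃ h : Polynomial O, omegaP O ℓ n = Polynomial.X ^ (ℓ ^ n) + (ℓ : Polynomial O) * h := by
  have hdvd : Polynomial.C (ℓ : O) ∣ (omegaP O ℓ n - Polynomial.X ^ (ℓ ^ n)) := by
    refine C_dvd_of_dvd_coeff _ _ fun i => ?_
    rw [omegaP, Polynomial.coeff_sub, Polynomial.coeff_sub, Polynomial.coeff_one_add_X_pow,
      Polynomial.coeff_X_pow, Polynomial.coeff_one]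
    have hN : 0 < ℓ ^ n := pow_pos hℓ.pos n
    rcases eq_or_ne i 0 with rfl | hi0
    · rw [if_pos rfl, if_neg hN.ne, Nat.choose_zero_right]
      simp
    · rcases eq_or_ne i (ℓ ^ n) with rfl | hiN
      · rw [if_pos rfl, if_neg hi0, Nat.choose_self]
        simp
      · rw [if_neg hi0, if_neg hiN]
        have := hℓ.dvd_choose_pow hi0 hiN
        simpa using (Nat.cast_dvd_cast (α := O) this)
  obtain ⟨h, hh⟩ := hdvd
  refine ⟨h, ?_⟩
  have : (ℓ : Polynomial O) = Polynomial.C (ℓ : O) := by rw [Polynomial.C_eq_natCast]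
  rw [this, ← hh]; ring

/-- generic: (a - b*c)^m ∈ span {b^m, a} -/
lemma pow_sub_mem_span {R : Type*} [CommRing R] (a b c : R) (m : ℕ) :
    (a - b * c) ^ m ∈ Ideal.span {b ^ m, a} := by
  have ha : a ∈ Ideal.span {b ^ m, a} :=
    Ideal.subset_span (by simp)
  have hb : b ^ m ∈ Ideal.span {b ^ m, a} :=
    Ideal.subset_span (by simp)
  have hdvd : a ∣ (a - b * c) ^ m - (-(b * c)) ^ m := by
    have h := sub_dvd_pow_sub_pow (a - b * c) (-(b * c)) m
    have he : (a - b * c) - (-(b * c)) = a := by ring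
    rwa [he] at h
  obtain ⟨q, hq⟩ := hdvd
  have h1 : (a - b * c) ^ m = a * q + (-c) ^ m * b ^ m := by
    have h2 : (-(b * c)) ^ m = (-c) ^ m * b ^ m := by
      rw [← mul_pow]; ring_nf
    linear_combination hq + h2
  rw [h1]
  exact Ideal.add_mem _ (Ideal.mul_mem_right _ _ ha) (Ideal.mul_mem_left _ _ hb)

end Poly

namespace CardNablaAux
open PowerSeries

variable {O : Type*} [CommRing O] (D : ℕ)

lemma mk_trunc_coe (J : Ideal (Polynomial O)) (hX : (Polynomial.X : Polynomial O) ^ D ∈ J)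
    (q : Polynomial O) :
    Ideal.Quotient.mk J (trunc D (q : PowerSeries O)) = Ideal.Quotient.mk J q := by
  rw [Ideal.Quotient.mk_eq_mk_iff_sub_mem]
  have hdvd : (Polynomial.X : Polynomial O) ^ D ∣ (trunc D (q : PowerSeries O) - q) := by
    rw [Polynomial.X_pow_dvd_iff]
    intro d hd
    rw [Polynomial.coeff_sub, coeff_trunc, if_pos hd, Polynomial.coeff_coe, sub_self]
  obtain ⟨r, hr⟩ := hdvd
  rw [hr]
  exact Ideal.mul_mem_right _ _ hX

lemma mk_trunc_ps (I : Ideal (PowerSeries O)) (hX : (PowerSeries.X : PowerSeries O) ^ D ∈ I)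
    (f : PowerSeries O) :
    Ideal.Quotient.mk I ((trunc D f : PowerSeries O)) = Ideal.Quotient.mk I f := by
  rw [Ideal.Quotient.mk_eq_mk_iff_sub_mem]
  have hdvd : (PowerSeries.X : PowerSeries O) ^ D ∣ ((trunc D f : PowerSeries O) - f) := by
    rw [PowerSeries.X_pow_dvd_iff]
    intro d hd
    rw [map_sub, Polynomial.coeff_coe, coeff_trunc, if_pos hd, sub_self]
  obtain ⟨r, hr⟩ := hdvd
  rw [hr]
  exact Ideal.mul_mem_right _ _ hX

/-- truncation as ring hom to the quotient, given `X^D` lies in the ideal. -/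
noncomputable def truncQuotHom (J : Ideal (Polynomial O))
    (hX : (Polynomial.X : Polynomial O) ^ D ∈ J) :
    PowerSeries O →+* Polynomial O ⧸ J where
  toFun f := Ideal.Quotient.mk J (trunc D f)
  map_one' := by
    have h := mk_trunc_coe D J hX 1
    rw [Polynomial.coe_one] at h
    simpa using h
  map_mul' f g := by
    show Ideal.Quotient.mk J (trunc D (f * g)) =
      Ideal.Quotient.mk J (trunc D f) * Ideal.Quotient.mk J (trunc D g)
    rw [← map_mul, ← trunc_trunc_mul_trunc (n := D) f g, ← Polynomial.coe_mul,
      mk_trunc_coe D J hX]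
  map_zero' := by
    show Ideal.Quotient.mk J (trunc D (0 : PowerSeries O)) = 0
    rw [map_zero, map_zero]
  map_add' f g := by
    show Ideal.Quotient.mk J (trunc D (f + g)) = _
    rw [map_add, map_add]

lemma truncQuotHom_apply (J : Ideal (Polynomial O))
    (hX : (Polynomial.X : Polynomial O) ^ D ∈ J) (f : PowerSeries O) :
    truncQuotHom D J hX f = Ideal.Quotient.mk J (trunc D f) := rfl

lemma truncQuotHom_coe (J : Ideal (Polynomial O))
    (hX : (Polynomial.X : Polynomial O) ^ D ∈ J) (q : Polynomial O) :
    truncQuotHom D J hX (q : PowerSeries O) = Ideal.Quotient.mk J q := by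
  rw [truncQuotHom_apply, mk_trunc_coe D J hX]

lemma card_quotient_span_pair_coe (p1 p2 : Polynomial O)
    (hXJ : (Polynomial.X : Polynomial O) ^ D ∈ Ideal.span {p1, p2}) :
    Nat.card (PowerSeries O ⧸ Ideal.span {(p1 : PowerSeries O), (p2 : PowerSeries O)}) =
      Nat.card (Polynomial O ⧸ Ideal.span {p1, p2}) := by
  set J : Ideal (Polynomial O) := Ideal.span {p1, p2} with hJ
  set I : Ideal (PowerSeries O) := Ideal.span {(p1 : PowerSeries O), (p2 : PowerSeries O)}
    with hI
  have hXI : (PowerSeries.X : PowerSeries O) ^ D ∈ I := by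
    obtain ⟨u, v, huv⟩ := Ideal.mem_span_pair.mp hXJ
    have : ((u : PowerSeries O)) * (p1 : PowerSeries O) +
        ((v : PowerSeries O)) * (p2 : PowerSeries O) = (PowerSeries.X : PowerSeries O) ^ D := by
      have := congrArg (fun q : Polynomial O => (q : PowerSeries O)) huv
      simpa [Polynomial.coe_add, Polynomial.coe_mul, Polynomial.coe_pow, Polynomial.coe_X]
        using this
    exact Ideal.mem_span_pair.mpr ⟨u, v, this⟩
  -- the forward map
  have hker : ∀ a ∈ I, truncQuotHom D J hXJ a = 0 := by
    intro a ha
    have hle : I ≤ RingHom.ker (truncQuotHom D J hXJ) := by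
      rw [hI, Ideal.span_le]
      rintro x (rfl | rfl)
      · rw [SetLike.mem_coe, RingHom.mem_ker, truncQuotHom_coe,
          Ideal.Quotient.eq_zero_iff_mem]
        exact Ideal.subset_span (by simp)
      · rw [SetLike.mem_coe, RingHom.mem_ker, truncQuotHom_coe,
          Ideal.Quotient.eq_zero_iff_mem]
        exact Ideal.subset_span (by simp)
    exact hle ha
  set θ : PowerSeries O ⧸ I →+* Polynomial O ⧸ J :=
    Ideal.Quotient.lift I (truncQuotHom D J hXJ) hker with hθ
  -- the reverse map
  have hker2 : ∀ a ∈ J, (Ideal.Quotient.mk I).comp Polynomial.coeToPowerSeries.ringHom a = 0 := by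
    intro a ha
    have hle : J ≤ RingHom.ker ((Ideal.Quotient.mk I).comp Polynomial.coeToPowerSeries.ringHom) := by
      rw [hJ, Ideal.span_le]
      rintro x (rfl | rfl)
      · rw [SetLike.mem_coe, RingHom.mem_ker, RingHom.comp_apply,
          Polynomial.coeToPowerSeries.ringHom_apply, Ideal.Quotient.eq_zero_iff_mem]
        exact Ideal.subset_span (by simp)
      · rw [SetLike.mem_coe, RingHom.mem_ker, RingHom.comp_apply,
          Polynomial.coeToPowerSeries.ringHom_apply, Ideal.Quotient.eq_zero_iff_mem]
        exact Ideal.subset_span (by simp)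
    exact hle ha
  set ρ : Polynomial O ⧸ J →+* PowerSeries O ⧸ I :=
    Ideal.Quotient.lift J _ hker2 with hρ
  refine Nat.card_congr ⟨θ, ρ, ?_, ?_⟩
  · intro x
    obtain ⟨f, rfl⟩ := Ideal.Quotient.mk_surjective x
    rw [hθ, Ideal.Quotient.lift_mk, truncQuotHom_apply, hρ, Ideal.Quotient.lift_mk,
      RingHom.comp_apply, Polynomial.coeToPowerSeries.ringHom_apply]
    exact mk_trunc_ps D I hXI f
  · intro x
    obtain ⟨q, rfl⟩ := Ideal.Quotient.mk_surjective x
    rw [hρ, Ideal.Quotient.lift_mk, RingHom.comp_apply,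
      Polynomial.coeToPowerSeries.ringHom_apply, hθ, Ideal.Quotient.lift_mk]
    exact truncQuotHom_coe D J hXJ q

end CardNablaAux

/-- `ω_n = (1+T)^(ℓ^n) - 1` in `Λ_O = O[[T]]`. -/
noncomputable def omegaO (O : Type*) [CommRing O] (ℓ n : ℕ) : PowerSeries O :=
  (1 + PowerSeries.X) ^ (ℓ ^ n) - 1

/-- `∇_n = ℓ^(n+1)Λ_O + ω_nΛ_O`. -/
noncomputable def nablaO (O : Type*) [CommRing O] (ℓ n : ℕ) : Ideal (PowerSeries O) :=
  Ideal.span {(ℓ : PowerSeries O) ^ (n + 1), omegaO O ℓ n}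

set_option maxHeartbeats 1000000 in
/-- For `X = Λ_O/ℓ^mΛ_O` with `O` the valuation ring of a finite unramified extension of
`ℚ_ℓ` of degree `d` and `m ≥ 1`, for every `n ≥ m` the index `(X : ∇_nX)` equals
`ℓ^(m·ℓ^n·d)`. -/
theorem card_quotient_nabla_ell_power (ℓ : ℕ) [Fact ℓ.Prime]
    (O : Type*) [CommRing O] [IsDomain O] [Algebra ℤ_[ℓ] O]
    [Module.Finite ℤ_[ℓ] O] [Module.Free ℤ_[ℓ] O]
    (hmax : (Ideal.span {(ℓ : O)}).IsMaximal)
    (huniq : ∀ M : Ideal O, M.IsMaximal → M = Ideal.span {(ℓ : O)})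
    (m : ℕ) (hm : 0 < m) (n : ℕ) (hn : m ≤ n) :
    Nat.card ((PowerSeries O ⧸ Ideal.span {(ℓ : PowerSeries O) ^ m}) ⧸
        (nablaO O ℓ n • (⊤ : Submodule (PowerSeries O)
          (PowerSeries O ⧸ Ideal.span {(ℓ : PowerSeries O) ^ m})))) =
      ℓ ^ (m * ℓ ^ n * Module.finrank ℤ_[ℓ] O) := by
  classical
  have hℓp : ℓ.Prime := Fact.out
  set Λ := PowerSeries O
  set I₀ : Ideal Λ := Ideal.span {(ℓ : Λ) ^ m} with hI₀
  set nab : Ideal Λ := nablaO O ℓ n with hnab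
  set N : ℕ := ℓ ^ n with hN
  have hNpos : 0 < N := pow_pos hℓp.pos n
  set ω : Λ := omegaO O ℓ n with hω
  set ωp : Polynomial O := omegaP O ℓ n with hωp
  have hcoe : ((ωp : Polynomial O) : PowerSeries O) = ω := coe_omegaP ℓ n
  -- Step 1 : reduce to a single quotient of Λ
  have step1 : Nat.card ((Λ ⧸ I₀) ⧸ (nab • (⊤ : Submodule Λ (Λ ⧸ I₀)))) =
      Nat.card (Λ ⧸ (I₀ ⊔ nab)) := by
    have h1 : nab • (⊤ : Submodule Λ (Λ ⧸ I₀)) =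
        (Ideal.map (Ideal.Quotient.mk I₀) nab).restrictScalars Λ := by
      rw [Ideal.smul_top_eq_map, Ideal.Quotient.algebraMap_eq]
    rw [Nat.card_congr (Submodule.quotEquivOfEq _ _ h1).toEquiv]
    rw [Nat.card_congr (Submodule.Quotient.restrictScalarsEquiv Λ
      ((Ideal.map (Ideal.Quotient.mk I₀) nab) : Submodule (Λ ⧸ I₀) (Λ ⧸ I₀))).toEquiv]
    exact Nat.card_congr (DoubleQuot.quotQuotEquivQuotSup I₀ nab).toEquiv
  -- Step 2 : identify the ideal
  have step2 : I₀ ⊔ nab = Ideal.span {(ℓ : Λ) ^ m, ω} := by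
    rw [hnab, nablaO, hI₀, ← hω, ← Ideal.span_union, Set.singleton_union]
    apply le_antisymm
    · rw [Ideal.span_le]
      rintro x (rfl | rfl | rfl)
      · exact Ideal.subset_span (by simp)
      · have : (ℓ : Λ) ^ (n + 1) = (ℓ : Λ) ^ m * (ℓ : Λ) ^ (n + 1 - m) := by
          rw [← pow_add, Nat.add_sub_cancel' (by omega)]
        rw [SetLike.mem_coe, this]
        exact Ideal.mul_mem_right _ _ (Ideal.subset_span (by simp))
      · exact Ideal.subset_span (by simp)
    · rw [Ideal.span_le]
      rintro x (rfl | rfl)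
      · exact Ideal.subset_span (by simp)
      · exact Ideal.subset_span (by simp)
  -- X ^ (N * m) lies in the polynomial ideal
  obtain ⟨h, hh⟩ := exists_omegaP_eq (O := O) ℓ n hℓp
  have hXJ : (Polynomial.X : Polynomial O) ^ (N * m) ∈
      Ideal.span {(ℓ : Polynomial O) ^ m, ωp} := by
    have hXN : (Polynomial.X : Polynomial O) ^ N = ωp - (ℓ : Polynomial O) * h := by
      rw [hωp, hN, hh]; ring
    rw [pow_mul, hXN]
    exact pow_sub_mem_span ωp (ℓ : Polynomial O) h m
  -- Step 3 : compare with the polynomial quotient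
  have hcoeℓ : (((ℓ : Polynomial O) ^ m : Polynomial O) : PowerSeries O) = (ℓ : Λ) ^ m := by
    rw [Polynomial.coe_pow]
    congr 1
    have := map_natCast (Polynomial.coeToPowerSeries.ringHom (R := O)) ℓ
    rwa [Polynomial.coeToPowerSeries.ringHom_apply] at this
  have step3 : Nat.card (Λ ⧸ Ideal.span {(ℓ : Λ) ^ m, ω}) =
      Nat.card (Polynomial O ⧸ Ideal.span {(ℓ : Polynomial O) ^ m, ωp}) := by
    have := CardNablaAux.card_quotient_span_pair_coe (N * m) ((ℓ : Polynomial O) ^ m) ωp hXJ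
    rwa [hcoeℓ, hcoe] at this
  -- Step 4 : split off the monic part
  have hmonic : ωp.Monic := omegaP_monic ℓ n hNpos
  set Jω : Ideal (Polynomial O) := Ideal.span {ωp} with hJω
  set c : O := (ℓ : O) ^ m with hc
  have step4 : Nat.card (Polynomial O ⧸ Ideal.span {(ℓ : Polynomial O) ^ m, ωp}) =
      Nat.card (AdjoinRoot ωp ⧸ Ideal.span {algebraMap O (AdjoinRoot ωp) c}) := by
    have hsup : Ideal.span {(ℓ : Polynomial O) ^ m, ωp} =
        Jω ⊔ Ideal.span {(ℓ : Polynomial O) ^ m} := by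
      rw [Ideal.span_insert, sup_comm, hJω]
    rw [hsup, ← Nat.card_congr (DoubleQuot.quotQuotEquivQuotSup Jω
      (Ideal.span {(ℓ : Polynomial O) ^ m})).toEquiv]
    have helt : Ideal.Quotient.mk Jω ((ℓ : Polynomial O) ^ m) =
        algebraMap O (AdjoinRoot ωp) c := by
      have h0 : algebraMap O (AdjoinRoot ωp) c = AdjoinRoot.mk ωp (Polynomial.C c) := rfl
      have h1 : Polynomial.C ((ℓ : O) ^ m) = ((ℓ : Polynomial O)) ^ m := by
        rw [map_pow, Polynomial.C_eq_natCast]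
      rw [h0, hc, h1]
      rfl
    have hK : Ideal.map (Ideal.Quotient.mk Jω) (Ideal.span {(ℓ : Polynomial O) ^ m}) =
        Ideal.span {algebraMap O (AdjoinRoot ωp) c} := by
      rw [Ideal.map_span, Set.image_singleton, helt]
      rfl
    exact congrArg (fun K : Ideal (Polynomial O ⧸ Jω) => Nat.card ((Polynomial O ⧸ Jω) ⧸ K)) hK
  -- Step 5 : count using the power basis
  have hcard1 : Nat.card (AdjoinRoot ωp ⧸ Ideal.span {algebraMap O (AdjoinRoot ωp) c}) =
      Nat.card (O ⧸ Ideal.span {c}) ^ N := by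
    have hb := card_quotient_span_algebraMap (AdjoinRoot.powerBasis' hmonic).basis c
    have hdeg : ωp.natDegree = N := by
      rw [hωp, hN]; exact omegaP_natDegree ℓ n (hN ▸ hNpos)
    rwa [Fintype.card_fin, AdjoinRoot.powerBasis'_dim, hdeg] at hb
  -- Step 6 : the cardinality of O ⧸ (ℓ^m)
  have hcard2 : Nat.card (O ⧸ Ideal.span {c}) = ℓ ^ (m * Module.finrank ℤ_[ℓ] O) := by
    have halg : algebraMap ℤ_[ℓ] O ((ℓ : ℤ_[ℓ]) ^ m) = c := by
      rw [map_pow, map_natCast, hc]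
    have hb := card_quotient_span_algebraMap (Module.Free.chooseBasis ℤ_[ℓ] O) ((ℓ : ℤ_[ℓ]) ^ m)
    rw [halg] at hb
    rw [hb, card_padic_quotient ℓ m, ← Module.finrank_eq_card_chooseBasisIndex, ← pow_mul]
  rw [step1, step2, step3, step4, hcard1, hcard2, ← pow_mul]
  congr 1
  rw [hN]
  ring
end

section
/- Let T be a finitely generated torsion Λ-module (Λ = ℤ_ℓ[[T]]) that is elementary, i.e., a finite direct sum of modules Λ/ℓ^{m_j}Λ and Λ/f_iΛ with f_i distinguished polynomials. Set ∂^nT = ℓ^{n+1}T ∩ ω_nT with ω_n = (1+T)^{ℓ^n} − 1. Then there exists n_0 such that for all n ≥ n_0, ∂^nT = ℓ^{n−n_0}·∂^{n_0}T. -/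
set_option maxHeartbeats 1000000
set_option synthInstance.maxHeartbeats 400000
open PowerSeries Pointwise


/-- `ω_n = (1+T)^(ℓ^n) - 1` in the Iwasawa algebra `Λ = ℤ_ℓ[[T]]`. -/
noncomputable def omegaIw (ℓ : ℕ) [Fact ℓ.Prime] (n : ℕ) : PowerSeries ℤ_[ℓ] :=
  (1 + PowerSeries.X) ^ (ℓ ^ n) - 1

section
variable (ℓ : ℕ) [Fact ℓ.Prime]
local notation "Λ" => PowerSeries ℤ_[ℓ]

lemma not_unit_ell : ¬ IsUnit (ℓ : ℤ_[ℓ]) := fun h => (mem_nonunits_iff.mp PadicInt.p_nonunit) h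

lemma exists_mul_of_coeffs (g : Λ) (h : ∀ k, (PowerSeries.coeff k) g ∈ Ideal.span {(ℓ:ℤ_[ℓ])}) :
    ∃ g', g = (ℓ : Λ) * g' := by
  choose c hc using fun k => Ideal.mem_span_singleton'.mp (h k)
  refine ⟨PowerSeries.mk c, ?_⟩
  ext k
  rw [← map_natCast (PowerSeries.C) ℓ, PowerSeries.coeff_C_mul, PowerSeries.coeff_mk,
    ← hc k, mul_comm]

variable (f : Polynomial ℤ_[ℓ])

lemma f_decomp (hf : IsDistinguishedAt ℓ f) :
    ∃ b : Λ, (f : Λ) = X ^ f.natDegree + (ℓ : Λ) * b := by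
  obtain ⟨b, hb⟩ := exists_mul_of_coeffs ℓ ((f : Λ) - X ^ f.natDegree) (by
    intro k
    rw [map_sub, Polynomial.coeff_coe, PowerSeries.coeff_X_pow]
    rcases lt_trichotomy k f.natDegree with h | h | h
    · rw [if_neg h.ne, sub_zero]; exact hf.2 k h
    · rw [if_pos h, h, hf.1.coeff_natDegree, sub_self]; exact zero_mem _
    · rw [Polynomial.coeff_eq_zero_of_natDegree_lt h, if_neg h.ne', sub_zero]; exact zero_mem _)
  exact ⟨b, by rw [← hb]; ring⟩

lemma span_f_ne_top (hf : IsDistinguishedAt ℓ f) (hd : 0 < f.natDegree) :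
    (Ideal.span {(f : Λ)} : Ideal Λ) ≠ ⊤ := by
  rw [Ne, Ideal.span_singleton_eq_top]
  intro hu
  have h0 : IsUnit (PowerSeries.constantCoeff (f : Λ)) := hu.map _
  have hc : PowerSeries.constantCoeff (f : Λ) = f.coeff 0 := by
    rw [← PowerSeries.coeff_zero_eq_constantCoeff_apply, Polynomial.coeff_coe]
  rw [hc] at h0
  obtain ⟨a, ha⟩ := Ideal.mem_span_singleton.mp (hf.2 0 hd)
  exact not_unit_ell ℓ (isUnit_of_dvd_unit (Dvd.intro a ha.symm) h0)

lemma quot_local (hf : IsDistinguishedAt ℓ f) (hd : 0 < f.natDegree) :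
    IsLocalRing (Λ ⧸ Ideal.span {(f : Λ)}) := by
  have : Nontrivial (Λ ⧸ Ideal.span {(f : Λ)}) :=
    Ideal.Quotient.nontrivial_iff.mpr (span_f_ne_top ℓ f hf hd)
  exact IsLocalRing.of_surjective' (Ideal.Quotient.mk _) Ideal.Quotient.mk_surjective

lemma mk_mem_max (hf : IsDistinguishedAt ℓ f) (hd : 0 < f.natDegree) (z : Λ)
    (hz : PowerSeries.constantCoeff z ∈ Ideal.span {(ℓ : ℤ_[ℓ])}) :
    ¬ IsUnit (Ideal.Quotient.mk (Ideal.span {(f : Λ)}) z) := by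
  intro hu
  obtain ⟨u, hu'⟩ := hu
  obtain ⟨g, hg⟩ := Ideal.Quotient.mk_surjective (↑u⁻¹ : Λ ⧸ Ideal.span {(f : Λ)})
  have h1 : Ideal.Quotient.mk (Ideal.span {(f : Λ)}) (z * g) = 1 := by
    rw [map_mul, ← hu', hg, u.mul_inv]
  rw [← map_one (Ideal.Quotient.mk (Ideal.span {(f : Λ)})), Ideal.Quotient.mk_eq_mk_iff_sub_mem,
    Ideal.mem_span_singleton] at h1
  obtain ⟨h, hh⟩ := h1
  have hcc := congrArg (PowerSeries.constantCoeff) hh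
  rw [map_sub, map_mul, map_one, map_mul] at hcc
  obtain ⟨a, ha⟩ := Ideal.mem_span_singleton.mp hz
  have hf0 : PowerSeries.constantCoeff (f : Λ) = f.coeff 0 := by
    rw [← PowerSeries.coeff_zero_eq_constantCoeff_apply, Polynomial.coeff_coe]
  obtain ⟨c, hc⟩ := Ideal.mem_span_singleton.mp (hf.2 0 hd)
  rw [ha, hf0, hc] at hcc
  refine not_unit_ell ℓ (IsUnit.of_mul_eq_one
    (a * PowerSeries.constantCoeff g - c * PowerSeries.constantCoeff h) ?_)
  linear_combination hcc

-- the "maximal ideal" generated by ℓ and X in the quotient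
noncomputable def mIdl : Ideal (Λ ⧸ Ideal.span {(f : Λ)}) :=
  Ideal.span {Ideal.Quotient.mk (Ideal.span {(f : Λ)}) (ℓ : Λ),
    Ideal.Quotient.mk (Ideal.span {(f : Λ)}) X}

lemma isUnit_one_add (hf : IsDistinguishedAt ℓ f) (hd : 0 < f.natDegree)
    (z : Λ ⧸ Ideal.span {(f : Λ)}) (hz : z ∈ mIdl ℓ f) : IsUnit (1 + z) := by
  letI := quot_local ℓ f hf hd
  by_contra hu
  have hm : mIdl ℓ f ≤ IsLocalRing.maximalIdeal _ := by
    rw [mIdl, Ideal.span_le]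
    rintro y (rfl | rfl)
    · exact IsLocalRing.mem_maximalIdeal _ |>.mpr (mk_mem_max ℓ f hf hd _ (by
        rw [map_natCast]; exact Ideal.mem_span_singleton_self _))
    · exact IsLocalRing.mem_maximalIdeal _ |>.mpr (mk_mem_max ℓ f hf hd _ (by
        rw [PowerSeries.constantCoeff_X]; exact zero_mem _))
  have h1 : (1 : Λ ⧸ Ideal.span {(f : Λ)}) ∈ IsLocalRing.maximalIdeal _ := by
    have : (1 + z) - z ∈ IsLocalRing.maximalIdeal _ :=
      Ideal.sub_mem _ (IsLocalRing.mem_maximalIdeal _ |>.mpr hu) (hm hz)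
    simpa using this
  exact (IsLocalRing.maximalIdeal.isMaximal _).ne_top (Ideal.eq_top_of_isUnit_mem _ h1 isUnit_one)

lemma Xpow_mem (hf : IsDistinguishedAt ℓ f) :
    (Ideal.Quotient.mk (Ideal.span {(f : Λ)}) X) ^ f.natDegree ∈
      Ideal.span {Ideal.Quotient.mk (Ideal.span {(f : Λ)}) (ℓ : Λ)} := by
  obtain ⟨b, hb⟩ := f_decomp ℓ f hf
  have : Ideal.Quotient.mk (Ideal.span {(f : Λ)}) (X ^ f.natDegree)
      = Ideal.Quotient.mk (Ideal.span {(f : Λ)}) (ℓ : Λ) *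
        Ideal.Quotient.mk (Ideal.span {(f : Λ)}) (-b) := by
    rw [← map_mul, ← sub_eq_zero, ← map_sub, Ideal.Quotient.eq_zero_iff_mem,
      Ideal.mem_span_singleton]
    exact ⟨1, by rw [hb]; ring⟩
  rw [← map_pow, this]
  exact Ideal.mul_mem_right _ _ (Ideal.mem_span_singleton_self _)

lemma omega_mem (hf : IsDistinguishedAt ℓ f) (n : ℕ) (hn : f.natDegree < ℓ ^ n) :
    Ideal.Quotient.mk (Ideal.span {(f : Λ)}) (omegaIw ℓ n) ∈
      Ideal.span {Ideal.Quotient.mk (Ideal.span {(f : Λ)}) (ℓ : Λ)} * mIdl ℓ f := by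
  set π := Ideal.Quotient.mk (Ideal.span {(f : Λ)})
  have hXm : π X ∈ mIdl ℓ f := Ideal.subset_span (Set.mem_insert_of_mem _ rfl)
  have hsum : omegaIw ℓ n = ∑ k ∈ Finset.range (ℓ ^ n), X ^ (k + 1) * ((ℓ ^ n).choose (k + 1) : Λ) := by
    rw [omegaIw, add_comm (1 : Λ) X, add_pow]
    rw [Finset.sum_range_succ']
    simp only [pow_zero, one_mul, Nat.choose_zero_right, Nat.cast_one, mul_one, one_pow]
    rw [add_sub_cancel_right]
  rw [hsum, map_sum]
  refine Ideal.sum_mem _ (fun k hk => ?_)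
  rw [Finset.mem_range] at hk
  have he0 : k + 1 = ℓ ^ n ∨ k + 1 < ℓ ^ n := by omega
  rcases he0 with he | hlt
  · -- top term k+1 = ℓ^n
    have h1 : (X : Λ) ^ (k + 1) * (((ℓ ^ n).choose (k + 1) : ℕ) : Λ)
        = X ^ f.natDegree * X ^ (ℓ ^ n - f.natDegree) := by
      rw [he, Nat.choose_self, Nat.cast_one, mul_one, ← pow_add,
        Nat.add_sub_cancel' hn.le]
    rw [h1, map_mul, map_pow, map_pow]
    exact Ideal.mul_mem_mul (Xpow_mem ℓ f hf)
      (Ideal.pow_mem_of_mem _ hXm _ (by omega))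
  · -- middle terms
    obtain ⟨c, hc⟩ := Nat.Prime.dvd_choose_pow (Fact.out : ℓ.Prime) (Nat.succ_ne_zero k)
      (by omega : k + 1 ≠ ℓ ^ n)
    have : (X : Λ) ^ (k + 1) * ((ℓ ^ n).choose (k + 1) : Λ)
        = (ℓ : Λ) * ((c : Λ) * X ^ k * X) := by
      rw [hc]; push_cast; ring
    rw [this, map_mul]
    refine Ideal.mul_mem_mul (Ideal.mem_span_singleton_self _) ?_
    rw [map_mul]
    exact Ideal.mul_mem_left _ _ hXm

lemma geom_mem (hf : IsDistinguishedAt ℓ f) (n k : ℕ) (hn : f.natDegree < ℓ ^ n) :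
    Ideal.Quotient.mk (Ideal.span {(f : Λ)}) (((1 + X : Λ) ^ (ℓ ^ n)) ^ k - 1) ∈
      Ideal.span {Ideal.Quotient.mk (Ideal.span {(f : Λ)}) (ℓ : Λ)} * mIdl ℓ f := by
  have h1 : ((1 + X : Λ) ^ (ℓ ^ n)) ^ k - 1
      = (∑ i ∈ Finset.range k, ((1 + X : Λ) ^ (ℓ ^ n)) ^ i) * omegaIw ℓ n := by
    rw [omegaIw]; exact (geom_sum_mul _ k).symm
  rw [h1, map_mul]
  exact Ideal.mul_mem_left _ _ (omega_mem ℓ f hf n hn)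

lemma nu_decomp (hf : IsDistinguishedAt ℓ f) (hd : 0 < f.natDegree) (n : ℕ)
    (hn : f.natDegree < ℓ ^ n) :
    ∃ u : Λ ⧸ Ideal.span {(f : Λ)}, IsUnit u ∧
      Ideal.Quotient.mk (Ideal.span {(f : Λ)}) (omegaIw ℓ (n + 1)) =
        (ℓ : Λ ⧸ Ideal.span {(f : Λ)}) * u *
          Ideal.Quotient.mk (Ideal.span {(f : Λ)}) (omegaIw ℓ n) := by
  set π := Ideal.Quotient.mk (Ideal.span {(f : Λ)}) with hπ
  set y : Λ := (1 + X) ^ (ℓ ^ n) with hy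
  have hfact : omegaIw ℓ (n + 1) = (∑ i ∈ Finset.range ℓ, y ^ i) * omegaIw ℓ n := by
    rw [omegaIw, omegaIw, pow_succ, pow_mul]
    exact (geom_sum_mul y ℓ).symm
  have hmem : π (∑ i ∈ Finset.range ℓ, y ^ i) - (ℓ : Λ ⧸ Ideal.span {(f : Λ)}) ∈
      Ideal.span {π (ℓ : Λ)} * mIdl ℓ f := by
    have h2 : π (∑ i ∈ Finset.range ℓ, y ^ i) - (ℓ : Λ ⧸ Ideal.span {(f : Λ)})
        = ∑ i ∈ Finset.range ℓ, π (y ^ i - 1) := by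
      simp only [map_sub, map_one, Finset.sum_sub_distrib, map_sum, Finset.sum_const,
        Finset.card_range, nsmul_eq_mul, mul_one]
    rw [h2]
    exact Ideal.sum_mem _ (fun i _ => geom_mem ℓ f hf n i hn)
  obtain ⟨j, hj, hjeq⟩ := Ideal.mem_span_singleton_mul.mp hmem
  refine ⟨1 + j, isUnit_one_add ℓ f hf hd j hj, ?_⟩
  rw [hfact, map_mul]
  have h3 : π (∑ i ∈ Finset.range ℓ, y ^ i)
      = (ℓ : Λ ⧸ Ideal.span {(f : Λ)}) * (1 + j) := by
    have h4 := hjeq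
    rw [map_natCast] at h4
    linear_combination -h4
  rw [h3]

lemma chain (hf : IsDistinguishedAt ℓ f) :
    ∃ n₁ : ℕ, ∀ n₀, n₁ ≤ n₀ → ∀ n, n₀ ≤ n →
      ∃ u : Λ ⧸ Ideal.span {(f : Λ)}, IsUnit u ∧
        Ideal.Quotient.mk (Ideal.span {(f : Λ)}) (omegaIw ℓ n)
          = (ℓ : Λ ⧸ Ideal.span {(f : Λ)}) ^ (n - n₀) * u *
            Ideal.Quotient.mk (Ideal.span {(f : Λ)}) (omegaIw ℓ n₀) := by
  rcases Nat.eq_zero_or_pos f.natDegree with h0 | hd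
  · have hone : (f : Λ) = 1 := by
      rw [(hf.1.natDegree_eq_zero).mp h0, Polynomial.coe_one]
    have hsub : Subsingleton (Λ ⧸ Ideal.span {(f : Λ)}) :=
      ⟨fun a b => by
        obtain ⟨x, rfl⟩ := Ideal.Quotient.mk_surjective a
        obtain ⟨z, rfl⟩ := Ideal.Quotient.mk_surjective b
        rw [Ideal.Quotient.mk_eq_mk_iff_sub_mem, hone]
        exact Ideal.mem_span_singleton.mpr ⟨x - z, (one_mul _).symm⟩⟩
    exact ⟨0, fun n₀ _ n _ => ⟨1, isUnit_one, Subsingleton.elim _ _⟩⟩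
  · refine ⟨f.natDegree, fun n₀ hn₀ n hn => ?_⟩
    induction n, hn using Nat.le_induction with
    | base => exact ⟨1, isUnit_one, by rw [Nat.sub_self, pow_zero, one_mul, one_mul]⟩
    | succ n hn ih =>
      obtain ⟨u, hu, hueq⟩ := ih
      have hdn : f.natDegree < ℓ ^ n :=
        lt_of_le_of_lt (le_trans hn₀ hn) (Nat.lt_pow_self (Fact.out : ℓ.Prime).one_lt)
      obtain ⟨v, hv, hveq⟩ := nu_decomp ℓ f hf hd n hdn
      refine ⟨v * u, hv.mul hu, ?_⟩
      rw [hveq, hueq]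
      have h5 : n + 1 - n₀ = (n - n₀) + 1 := by omega
      rw [h5, pow_succ]
      ring

lemma tf_single (hf : IsDistinguishedAt ℓ f) (x : Λ ⧸ Ideal.span {(f : Λ)})
    (hx : (ℓ : Λ ⧸ Ideal.span {(f : Λ)}) * x = 0) : x = 0 := by
  obtain ⟨g, rfl⟩ := Ideal.Quotient.mk_surjective x
  rw [← map_natCast (Ideal.Quotient.mk (Ideal.span {(f : Λ)})) ℓ, ← map_mul,
    Ideal.Quotient.eq_zero_iff_mem, Ideal.mem_span_singleton] at hx
  obtain ⟨h, hh⟩ := hx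
  -- map to ZMod ℓ
  set φ := PowerSeries.map (PadicInt.toZMod : ℤ_[ℓ] →+* ZMod ℓ) with hφ
  have hker : ∀ z : ℤ_[ℓ], PadicInt.toZMod z = 0 ↔ z ∈ Ideal.span {(ℓ : ℤ_[ℓ])} := by
    intro z
    rw [← PadicInt.maximalIdeal_eq_span_p, ← PadicInt.ker_toZMod, RingHom.mem_ker]
  have hφf : φ (f : Λ) = X ^ f.natDegree := by
    ext k
    rw [PowerSeries.coeff_map, Polynomial.coeff_coe, PowerSeries.coeff_X_pow]
    rcases lt_trichotomy k f.natDegree with h' | h' | h'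
    · rw [if_neg h'.ne, (hker _).mpr (hf.2 k h')]
    · rw [if_pos h', h', hf.1.coeff_natDegree, map_one]
    · rw [Polynomial.coeff_eq_zero_of_natDegree_lt h', if_neg h'.ne', map_zero]
  have h0 : (0 : PowerSeries (ZMod ℓ)) = X ^ f.natDegree * φ h := by
    have := congrArg φ hh
    rw [map_mul, map_mul, map_natCast, hφf] at this
    rw [← this, ← map_natCast (PowerSeries.C) ℓ, ZMod.natCast_self, map_zero, zero_mul]
  have hφh : φ h = 0 := by
    have hX : (X : PowerSeries (ZMod ℓ)) ^ f.natDegree ≠ 0 :=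
      pow_ne_zero _ PowerSeries.X_ne_zero
    rcases mul_eq_zero.mp h0.symm with h' | h'
    · exact absurd h' hX
    · exact h'
  obtain ⟨h', rfl⟩ := exists_mul_of_coeffs ℓ h (fun k => by
    have := congrArg (PowerSeries.coeff k) hφh
    rw [PowerSeries.coeff_map, map_zero] at this
    exact (hker _).mp this)
  have hl : (ℓ : Λ) ≠ 0 := by
    intro h0
    have := congrArg (PowerSeries.constantCoeff) h0
    rw [map_natCast, map_zero] at this
    exact Nat.cast_ne_zero.mpr (Fact.out : ℓ.Prime).ne_zero this
  have : g = (f : Λ) * h' := by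
    have := hh
    rw [← mul_assoc, mul_comm (f : Λ) (ℓ : Λ), mul_assoc] at this
    exact mul_left_cancel₀ hl this
  rw [this, Ideal.Quotient.eq_zero_iff_mem]
  exact Ideal.mem_span_singleton.mpr ⟨h', rfl⟩


lemma tf_pow (hf : IsDistinguishedAt ℓ f) (k : ℕ) :
    ∀ x : Λ ⧸ Ideal.span {(f : Λ)},
      (ℓ : Λ ⧸ Ideal.span {(f : Λ)}) ^ k * x = 0 → x = 0 := by
  induction k with
  | zero => intro x hx; simpa using hx
  | succ k ih =>
    intro x hx
    refine tf_single ℓ f hf x (ih _ ?_)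
    rw [← mul_assoc, ← pow_succ]; exact hx

lemma quot_smul (I : Ideal Λ) (r g : Λ) :
    r • (Ideal.Quotient.mk I g) = Ideal.Quotient.mk I (r * g) := rfl

lemma quot_smul' (I : Ideal Λ) (r : Λ) (z : Λ ⧸ I) :
    r • z = Ideal.Quotient.mk I r * z := by
  obtain ⟨g, rfl⟩ := Ideal.Quotient.mk_surjective z
  rw [quot_smul, map_mul]

lemma pow_smul_zero (k t : ℕ) (hk : t ≤ k) (z : Λ ⧸ Ideal.span {(ℓ : Λ) ^ t}) :
    ((ℓ : Λ) ^ k) • z = 0 := by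
  obtain ⟨g, rfl⟩ := Ideal.Quotient.mk_surjective z
  rw [quot_smul, Ideal.Quotient.eq_zero_iff_mem, Ideal.mem_span_singleton]
  exact Dvd.dvd.mul_right (pow_dvd_pow _ hk) g

lemma mem_pt_smul {M : Type*} [AddCommGroup M] [Module Λ M] (a : Λ)
    (S : Submodule Λ M) (x : M) : x ∈ a • S ↔ ∃ y ∈ S, a • y = x := Iff.rfl

lemma cast_pow_mk (I : Ideal Λ) (e : ℕ) :
    (ℓ : Λ ⧸ I) ^ e = Ideal.Quotient.mk I ((ℓ : Λ) ^ e) := by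
  rw [map_pow, map_natCast]

end


/-- For an elementary torsion `Λ`-module
`T = (⊕_i Λ/f_iΛ) ⊕ (⊕_j Λ/ℓ^(m_j)Λ)` with the `f_i` distinguished, setting
`∂ⁿT = ℓ^(n+1)T ∩ ω_nT`, there is `n₀` with `∂ⁿT = ℓ^(n−n₀)·∂^(n₀)T` for all `n ≥ n₀`. -/
theorem elementary_torsion_partial_nabla (ℓ : ℕ) [Fact ℓ.Prime]
    (ι κ : Type) [Fintype ι] [Fintype κ]
    (f : ι → Polynomial ℤ_[ℓ]) (hf : ∀ i, IsDistinguishedAt ℓ (f i))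
    (m : κ → ℕ) (hm : ∀ j, 0 < m j) :
    ∃ n₀ : ℕ, ∀ n ≥ n₀,
      (Ideal.span {(ℓ : PowerSeries ℤ_[ℓ]) ^ (n + 1)}) •
          (⊤ : Submodule (PowerSeries ℤ_[ℓ])
            (((i : ι) → PowerSeries ℤ_[ℓ] ⧸ Ideal.span {((f i : PowerSeries ℤ_[ℓ]))}) ×
              ((j : κ) → PowerSeries ℤ_[ℓ] ⧸ Ideal.span {(ℓ : PowerSeries ℤ_[ℓ]) ^ (m j)}))) ⊓
        (Ideal.span {omegaIw ℓ n}) • ⊤ =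
      (Ideal.span {(ℓ : PowerSeries ℤ_[ℓ]) ^ (n - n₀)}) •
        ((Ideal.span {(ℓ : PowerSeries ℤ_[ℓ]) ^ (n₀ + 1)}) • ⊤ ⊓
          (Ideal.span {omegaIw ℓ n₀}) • ⊤) := by
  classical
  choose n₁ hn₁ using fun i => chain ℓ (f i) (hf i)
  refine ⟨max (Finset.univ.sup n₁) (Finset.univ.sup m), fun n hn => ?_⟩
  set n₀ := max (Finset.univ.sup n₁) (Finset.univ.sup m) with hn₀def
  have hmj : ∀ j, m j ≤ n₀ := fun j =>
    le_trans (Finset.le_sup (Finset.mem_univ j)) (le_max_right _ _)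
  have hn₀n : n₀ ≤ n := hn
  choose u hu hueq using fun i =>
    hn₁ i n₀ (le_trans (Finset.le_sup (Finset.mem_univ i)) (le_max_left _ _)) n hn₀n
  choose v hv using fun i => (hu i).exists_right_inv
  simp only [Submodule.ideal_span_singleton_smul]
  ext x
  simp only [Submodule.mem_inf, mem_pt_smul, Submodule.mem_top, true_and]
  constructor
  · rintro ⟨⟨y, hy⟩, ⟨w, hw⟩⟩
    have hyc1 : ∀ i, (ℓ : PowerSeries ℤ_[ℓ]) ^ (n + 1) • y.1 i = x.1 i :=
      fun i => congrFun (congrArg Prod.fst hy) i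
    have hyc2 : ∀ j, (ℓ : PowerSeries ℤ_[ℓ]) ^ (n + 1) • y.2 j = x.2 j :=
      fun j => congrFun (congrArg Prod.snd hy) j
    have hwc1 : ∀ i, omegaIw ℓ n • w.1 i = x.1 i :=
      fun i => congrFun (congrArg Prod.fst hw) i
    refine ⟨(fun i => (ℓ : PowerSeries ℤ_[ℓ]) ^ (n₀ + 1) • y.1 i, 0),
      ⟨⟨(y.1, 0), Prod.ext (funext fun i => rfl) (smul_zero _)⟩,
       ⟨(fun i => u i * w.1 i, 0),
        Prod.ext (funext fun i => ?_) (smul_zero _)⟩⟩, Prod.ext (funext fun i => ?_)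
          (funext fun j => ?_)⟩
    · -- ω_{n₀} • (u i * w.1 i) = ℓ^{n₀+1} • y.1 i
      show omegaIw ℓ n₀ • (u i * w.1 i) = (ℓ : PowerSeries ℤ_[ℓ]) ^ (n₀ + 1) • y.1 i
      rw [quot_smul' ℓ, quot_smul' ℓ, ← sub_eq_zero]
      refine tf_pow ℓ (f i) (hf i) (n - n₀) _ ?_
      have h1 := hueq i
      have h2 : Ideal.Quotient.mk (Ideal.span {(f i : PowerSeries ℤ_[ℓ])}) (omegaIw ℓ n) * w.1 i
          = x.1 i := by rw [← quot_smul' ℓ]; exact hwc1 i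
      have h3 : Ideal.Quotient.mk (Ideal.span {(f i : PowerSeries ℤ_[ℓ])})
          ((ℓ : PowerSeries ℤ_[ℓ]) ^ (n + 1)) * y.1 i = x.1 i := by
        rw [← quot_smul' ℓ]; exact hyc1 i
      have h4 : (ℓ : PowerSeries ℤ_[ℓ] ⧸ Ideal.span {(f i : PowerSeries ℤ_[ℓ])}) ^ (n - n₀) *
          Ideal.Quotient.mk (Ideal.span {(f i : PowerSeries ℤ_[ℓ])})
            ((ℓ : PowerSeries ℤ_[ℓ]) ^ (n₀ + 1))
          = Ideal.Quotient.mk (Ideal.span {(f i : PowerSeries ℤ_[ℓ])})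
            ((ℓ : PowerSeries ℤ_[ℓ]) ^ (n + 1)) := by
        rw [cast_pow_mk, ← map_mul, ← pow_add,
          (by omega : n - n₀ + (n₀ + 1) = n + 1)]
      linear_combination -((w.1 i) * h1) + h2 - h3 - (y.1 i) * h4
    · -- fst of ℓ^{n-n₀} • s = x
      show (ℓ : PowerSeries ℤ_[ℓ]) ^ (n - n₀) • ((ℓ : PowerSeries ℤ_[ℓ]) ^ (n₀ + 1) • y.1 i)
        = x.1 i
      rw [smul_smul, ← pow_add, (by omega : n - n₀ + (n₀ + 1) = n + 1)]
      exact hyc1 i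
    · -- snd of ℓ^{n-n₀} • s = x
      show (ℓ : PowerSeries ℤ_[ℓ]) ^ (n - n₀) • (0 : _) = x.2 j
      rw [smul_zero, ← hyc2 j, pow_smul_zero ℓ _ _ (by have := hmj j; omega : m j ≤ n + 1)]
  · rintro ⟨s, ⟨⟨y, hy⟩, ⟨w, hw⟩⟩, hx⟩
    have hyc1 : ∀ i, (ℓ : PowerSeries ℤ_[ℓ]) ^ (n₀ + 1) • y.1 i = s.1 i :=
      fun i => congrFun (congrArg Prod.fst hy) i
    have hyc2 : ∀ j, (ℓ : PowerSeries ℤ_[ℓ]) ^ (n₀ + 1) • y.2 j = s.2 j :=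
      fun j => congrFun (congrArg Prod.snd hy) j
    have hwc1 : ∀ i, omegaIw ℓ n₀ • w.1 i = s.1 i :=
      fun i => congrFun (congrArg Prod.fst hw) i
    have hxc1 : ∀ i, (ℓ : PowerSeries ℤ_[ℓ]) ^ (n - n₀) • s.1 i = x.1 i :=
      fun i => congrFun (congrArg Prod.fst hx) i
    have hxc2 : ∀ j, (ℓ : PowerSeries ℤ_[ℓ]) ^ (n - n₀) • s.2 j = x.2 j :=
      fun j => congrFun (congrArg Prod.snd hx) j
    constructor
    · refine ⟨y, ?_⟩
      rw [← hx, ← hy, smul_smul, ← pow_add, (by omega : n - n₀ + (n₀ + 1) = n + 1)]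
    · refine ⟨(fun i => v i * w.1 i, 0),
        Prod.ext (funext fun i => ?_) (funext fun j => ?_)⟩
      · show omegaIw ℓ n • (v i * w.1 i) = x.1 i
        rw [quot_smul' ℓ]
        have h1 := hueq i
        have h2 : Ideal.Quotient.mk (Ideal.span {(f i : PowerSeries ℤ_[ℓ])}) (omegaIw ℓ n₀) *
            w.1 i = s.1 i := by rw [← quot_smul' ℓ]; exact hwc1 i
        have h3 : (ℓ : PowerSeries ℤ_[ℓ] ⧸ Ideal.span {(f i : PowerSeries ℤ_[ℓ])}) ^ (n - n₀) *
            s.1 i = x.1 i := by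
          rw [cast_pow_mk, ← quot_smul' ℓ]; exact hxc1 i
        have h5 := hv i
        calc Ideal.Quotient.mk (Ideal.span {(f i : PowerSeries ℤ_[ℓ])}) (omegaIw ℓ n) *
              (v i * w.1 i)
            = (u i * v i) * ((ℓ : PowerSeries ℤ_[ℓ] ⧸
                Ideal.span {(f i : PowerSeries ℤ_[ℓ])}) ^ (n - n₀) *
                (Ideal.Quotient.mk (Ideal.span {(f i : PowerSeries ℤ_[ℓ])}) (omegaIw ℓ n₀) *
                  w.1 i)) := by rw [h1]; ring
          _ = x.1 i := by rw [h5, one_mul, h2, h3]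
      · show omegaIw ℓ n • (0 : _) = x.2 j
        rw [smul_zero, ← hxc2 j, ← hyc2 j,
          pow_smul_zero ℓ _ _ (by have := hmj j; omega : m j ≤ n₀ + 1), smul_zero]
end
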